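/- Let n ≥ 2 and let V be a symmetric positive definite n×n real matrix. Then λ_max(adj(V)) ≤ (tr(V) / (n−1))^{n−1}, where adj(V) = det(V) · V⁻¹ is the adjugate of V and λ_max denotes the largest eigenvalue. (Indeed λ_max(adj(V)) equals the product of the n−1 largest eigenvalues of V, which is bounded by the arithmetic–geometric mean inequality.) -/
import Mathlib


open Matrix

/-- Largest eigenvalue of a matrix, as the supremum of its real spectrum. -/
noncomputable def lamMax {n : ℕ} (W : Matrix (Fin n) (Fin n) ℝ) : ℝ :=
  sSup (spectrum ℝ W)

theorem lamMax_adjugate_le {n : ℕ} (hn : 2 ≤ n)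
    (V : Matrix (Fin n) (Fin n) ℝ) (hVs : V.IsSymm) (hV : V.PosDef) :
    lamMax (V.det • V⁻¹) ≤ (V.trace / ((n : ℝ) - 1)) ^ (n - 1) := by
  have hA : V.IsHermitian := hV.1
  set U : Matrix (Fin n) (Fin n) ℝ := (hA.eigenvectorUnitary : Matrix (Fin n) (Fin n) ℝ) with hU
  set lam := hA.eigenvalues with hlam
  have h1 : U * star U = 1 := (Matrix.mem_unitaryGroup_iff).mp (hA.eigenvectorUnitary).2
  have h2 : star U * U = 1 := (Matrix.mem_unitaryGroup_iff').mp (hA.eigenvectorUnitary).2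
  have hspec : V = U * diagonal lam * star U := by simpa using hA.spectral_theorem
  have hpos : ∀ i, 0 < lam i := hV.eigenvalues_pos
  have hne : ∀ i, lam i ≠ 0 := fun i => (hpos i).ne'
  have hDD : diagonal lam * diagonal (fun i => (lam i)⁻¹) = 1 := by
    rw [diagonal_mul_diagonal]
    convert diagonal_one using 2
    exact funext fun i => mul_inv_cancel₀ (hne i)
  have hVinv : V⁻¹ = U * diagonal (fun i => (lam i)⁻¹) * star U := by
    apply inv_eq_right_inv
    calc V * (U * diagonal (fun i => (lam i)⁻¹) * star U)
        = U * (diagonal lam * ((star U * U) * diagonal (fun i => (lam i)⁻¹))) * star U := by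
          rw [hspec]; simp only [mul_assoc]
      _ = 1 := by rw [h2, one_mul, hDD, mul_one, h1]
  have hDsmul : V.det • diagonal (fun i => (lam i)⁻¹) = diagonal (fun i => V.det * (lam i)⁻¹) := by
    rw [← diagonal_smul]
    rfl
  have hW : V.det • V⁻¹ = U * diagonal (fun i => V.det * (lam i)⁻¹) * star U := by
    rw [hVinv, ← smul_mul_assoc, ← mul_smul_comm, hDsmul]
  set u : (Matrix (Fin n) (Fin n) ℝ)ˣ := ⟨U, star U, h1, h2⟩ with hu
  have hspecW : spectrum ℝ (V.det • V⁻¹) = Set.range (fun i => V.det * (lam i)⁻¹) := by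
    rw [hW]
    have : U * diagonal (fun i => V.det * (lam i)⁻¹) * star U
        = (u : Matrix (Fin n) (Fin n) ℝ) * diagonal (fun i => V.det * (lam i)⁻¹)
          * (↑u⁻¹ : Matrix (Fin n) (Fin n) ℝ) := rfl
    rw [this, spectrum.units_conjugate, spectrum_diagonal]
  have htr : V.trace = ∑ i, lam i := by
    rw [hspec, Matrix.trace_mul_cycle, h2, one_mul, trace_diagonal]
  have hdet : V.det = ∏ i, lam i := by
    simpa using hA.det_eq_prod_eigenvalues
  have hne' : Nonempty (Fin n) := ⟨⟨0, by omega⟩⟩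
  rw [lamMax, hspecW]
  apply csSup_le (Set.range_nonempty _)
  rintro x ⟨k, rfl⟩
  -- rewrite the element as a product over the erased set
  have hprod : V.det * (lam k)⁻¹ = ∏ i ∈ Finset.univ.erase k, lam i := by
    rw [hdet, ← Finset.mul_prod_erase Finset.univ lam (Finset.mem_univ k),
      mul_comm (lam k), mul_assoc, mul_inv_cancel₀ (hne k), mul_one]
  show V.det * (lam k)⁻¹ ≤ _
  rw [hprod]
  -- AM-GM bound
  set s := Finset.univ.erase k with hs
  have hm : s.card = n - 1 := by
    rw [hs, Finset.card_erase_of_mem (Finset.mem_univ k)]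
    simp
  set m := n - 1 with hmdef
  have hm0 : m ≠ 0 := by omega
  have hcast : ((m:ℝ)) = (n:ℝ) - 1 := by
    rw [hmdef, Nat.cast_sub (by omega)]; simp
  have hPnn : (0:ℝ) ≤ ∏ i ∈ s, lam i :=
    Finset.prod_nonneg fun i _ => (hpos i).le
  have key : (∏ i ∈ s, lam i) ^ ((m:ℝ))⁻¹ ≤ (∑ i ∈ s, lam i) / m := by
    have := Real.geom_mean_le_arith_mean s (fun _ => (1:ℝ)) lam
      (fun i _ => zero_le_one) (by simp [hm]; positivity) (fun i _ => (hpos i).le)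
    simpa [hm] using this
  have step1 : (∏ i ∈ s, lam i) ≤ ((∑ i ∈ s, lam i) / m) ^ m := by
    calc ∏ i ∈ s, lam i = ((∏ i ∈ s, lam i) ^ ((m:ℝ))⁻¹) ^ m :=
        (Real.rpow_inv_natCast_pow hPnn hm0).symm
      _ ≤ ((∑ i ∈ s, lam i) / m) ^ m :=
        pow_le_pow_left₀ (Real.rpow_nonneg hPnn _) key m
  have hsum : (∑ i ∈ s, lam i) ≤ V.trace := by
    rw [htr]
    exact Finset.sum_le_sum_of_subset_of_nonneg (Finset.subset_univ s)
      (fun i _ _ => (hpos i).le)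
  refine step1.trans ?_
  rw [← hcast]
  have hm1 : (0:ℝ) < m := by positivity
  gcongr
  exact div_nonneg (Finset.sum_nonneg fun i _ => (hpos i).le) hm1.le
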